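/- (Quadratic-form representations of the Wu statistics.) Under the rank condition, for each l ∈ {1,2,3,4} with σ̃_l² ≠ 0 (where σ̃₁², σ̃₂², σ̃₃² := σ̃², σ̃₄² := σ̂² are the respective scaling factors), the matrix Σ̃_l = σ̃_l²·Δ̂ is invertible and the Wu statistic satisfies T_l := κ_l·(β̃−β̂)ᵀΣ̃_l⁻¹(β̃−β̂) = κ_l·(yᵀΨ₀y)/(yᵀΛ_ly). -/

import Mathlib

open Matrix

variable {T G k₁ k₂ : ℕ}

/-- Orthogonal projection `P̄[A] = A(AᵀA)⁻¹Aᵀ` onto the column space of `A`. -/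
noncomputable def projM {n : Type*} [Fintype n] [DecidableEq n]
    (A : Matrix (Fin T) n ℝ) : Matrix (Fin T) (Fin T) ℝ :=
  A * (Aᵀ * A)⁻¹ * Aᵀ

/-- The annihilator `M̄[A] = I - P̄[A]`. -/
noncomputable def annM {n : Type*} [Fintype n] [DecidableEq n]
    (A : Matrix (Fin T) n ℝ) : Matrix (Fin T) (Fin T) ℝ :=
  1 - projM A

noncomputable def M1 (X₁ : Matrix (Fin T) (Fin k₁) ℝ) : Matrix (Fin T) (Fin T) ℝ :=
  annM X₁

noncomputable def Pm (X₁ : Matrix (Fin T) (Fin k₁) ℝ) (X₂ : Matrix (Fin T) (Fin k₂) ℝ) :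
    Matrix (Fin T) (Fin T) ℝ :=
  projM (fromCols X₁ X₂)

noncomputable def Mm (X₁ : Matrix (Fin T) (Fin k₁) ℝ) (X₂ : Matrix (Fin T) (Fin k₂) ℝ) :
    Matrix (Fin T) (Fin T) ℝ :=
  annM (fromCols X₁ X₂)

noncomputable def N1 (X₁ : Matrix (Fin T) (Fin k₁) ℝ) (X₂ : Matrix (Fin T) (Fin k₂) ℝ) :
    Matrix (Fin T) (Fin T) ℝ :=
  M1 X₁ * Pm X₁ X₂

noncomputable def B1 (Y : Matrix (Fin T) (Fin G) ℝ) (X₁ : Matrix (Fin T) (Fin k₁) ℝ) :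
    Matrix (Fin G) (Fin T) ℝ :=
  (Yᵀ * M1 X₁ * Y)⁻¹ * (Yᵀ * M1 X₁)

noncomputable def B2 (Y : Matrix (Fin T) (Fin G) ℝ) (X₁ : Matrix (Fin T) (Fin k₁) ℝ)
    (X₂ : Matrix (Fin T) (Fin k₂) ℝ) : Matrix (Fin G) (Fin T) ℝ :=
  (Yᵀ * N1 X₁ X₂ * Y)⁻¹ * (Yᵀ * N1 X₁ X₂)

noncomputable def C1 (Y : Matrix (Fin T) (Fin G) ℝ) (X₁ : Matrix (Fin T) (Fin k₁) ℝ)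
    (X₂ : Matrix (Fin T) (Fin k₂) ℝ) : Matrix (Fin G) (Fin T) ℝ :=
  B2 Y X₁ X₂ - B1 Y X₁

/-- OLS estimator `β̂`. -/
noncomputable def betaOLS (y : Fin T → ℝ) (Y : Matrix (Fin T) (Fin G) ℝ)
    (X₁ : Matrix (Fin T) (Fin k₁) ℝ) : Fin G → ℝ :=
  B1 Y X₁ *ᵥ y

/-- 2SLS estimator `β̃`. -/
noncomputable def beta2S (y : Fin T → ℝ) (Y : Matrix (Fin T) (Fin G) ℝ)
    (X₁ : Matrix (Fin T) (Fin k₁) ℝ) (X₂ : Matrix (Fin T) (Fin k₂) ℝ) : Fin G → ℝ :=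
  B2 Y X₁ X₂ *ᵥ y

noncomputable def OmIV (Y : Matrix (Fin T) (Fin G) ℝ) (X₁ : Matrix (Fin T) (Fin k₁) ℝ)
    (X₂ : Matrix (Fin T) (Fin k₂) ℝ) : Matrix (Fin G) (Fin G) ℝ :=
  (T : ℝ)⁻¹ • (Yᵀ * N1 X₁ X₂ * Y)

noncomputable def OmLS (Y : Matrix (Fin T) (Fin G) ℝ) (X₁ : Matrix (Fin T) (Fin k₁) ℝ) :
    Matrix (Fin G) (Fin G) ℝ :=
  (T : ℝ)⁻¹ • (Yᵀ * M1 X₁ * Y)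

noncomputable def SigV (Y : Matrix (Fin T) (Fin G) ℝ) (X₁ : Matrix (Fin T) (Fin k₁) ℝ)
    (X₂ : Matrix (Fin T) (Fin k₂) ℝ) : Matrix (Fin G) (Fin G) ℝ :=
  (T : ℝ)⁻¹ • (Yᵀ * Mm X₁ X₂ * Y)

noncomputable def Dhat (Y : Matrix (Fin T) (Fin G) ℝ) (X₁ : Matrix (Fin T) (Fin k₁) ℝ)
    (X₂ : Matrix (Fin T) (Fin k₂) ℝ) : Matrix (Fin G) (Fin G) ℝ :=
  (OmIV Y X₁ X₂)⁻¹ - (OmLS Y X₁)⁻¹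

noncomputable def Psi0 (Y : Matrix (Fin T) (Fin G) ℝ) (X₁ : Matrix (Fin T) (Fin k₁) ℝ)
    (X₂ : Matrix (Fin T) (Fin k₂) ℝ) : Matrix (Fin T) (Fin T) ℝ :=
  (C1 Y X₁ X₂)ᵀ * (Dhat Y X₁ X₂)⁻¹ * C1 Y X₁ X₂

noncomputable def N2 (Y : Matrix (Fin T) (Fin G) ℝ) (X₁ : Matrix (Fin T) (Fin k₁) ℝ)
    (X₂ : Matrix (Fin T) (Fin k₂) ℝ) : Matrix (Fin T) (Fin T) ℝ :=
  1 - M1 X₁ * Y * B2 Y X₁ X₂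

noncomputable def Lam1 (Y : Matrix (Fin T) (Fin G) ℝ) (X₁ : Matrix (Fin T) (Fin k₁) ℝ)
    (X₂ : Matrix (Fin T) (Fin k₂) ℝ) : Matrix (Fin T) (Fin T) ℝ :=
  (T : ℝ)⁻¹ • (N1 X₁ X₂ * annM (N1 X₁ X₂ * Y) * N1 X₁ X₂)

noncomputable def Lam2 (Y : Matrix (Fin T) (Fin G) ℝ) (X₁ : Matrix (Fin T) (Fin k₁) ℝ)
    (X₂ : Matrix (Fin T) (Fin k₂) ℝ) : Matrix (Fin T) (Fin T) ℝ :=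
  M1 X₁ * ((T : ℝ)⁻¹ • annM (M1 X₁ * Y) - Psi0 Y X₁ X₂) * M1 X₁

noncomputable def Lam3 (Y : Matrix (Fin T) (Fin G) ℝ) (X₁ : Matrix (Fin T) (Fin k₁) ℝ)
    (X₂ : Matrix (Fin T) (Fin k₂) ℝ) : Matrix (Fin T) (Fin T) ℝ :=
  (T : ℝ)⁻¹ • (M1 X₁ * (N2 Y X₁ X₂)ᵀ * N2 Y X₁ X₂ * M1 X₁)

noncomputable def Lam4 (Y : Matrix (Fin T) (Fin G) ℝ) (X₁ : Matrix (Fin T) (Fin k₁) ℝ) :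
    Matrix (Fin T) (Fin T) ℝ :=
  (T : ℝ)⁻¹ • (M1 X₁ * annM (M1 X₁ * Y) * M1 X₁)

def Ybar (Y : Matrix (Fin T) (Fin G) ℝ) (X₁ : Matrix (Fin T) (Fin k₁) ℝ) :
    Matrix (Fin T) (Fin G ⊕ Fin k₁) ℝ :=
  fromCols Y X₁

def Zfull (Y : Matrix (Fin T) (Fin G) ℝ) (X₁ : Matrix (Fin T) (Fin k₁) ℝ)
    (X₂ : Matrix (Fin T) (Fin k₂) ℝ) : Matrix (Fin T) (Fin G ⊕ (Fin k₁ ⊕ Fin k₂)) ℝ :=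
  fromCols Y (fromCols X₁ X₂)

noncomputable def PsiR (Y : Matrix (Fin T) (Fin G) ℝ) (X₁ : Matrix (Fin T) (Fin k₁) ℝ)
    (X₂ : Matrix (Fin T) (Fin k₂) ℝ) : Matrix (Fin T) (Fin T) ℝ :=
  (T : ℝ)⁻¹ • (annM (Ybar Y X₁) - annM (Zfull Y X₁ X₂))

noncomputable def LamR (Y : Matrix (Fin T) (Fin G) ℝ) (X₁ : Matrix (Fin T) (Fin k₁) ℝ)
    (X₂ : Matrix (Fin T) (Fin k₂) ℝ) : Matrix (Fin T) (Fin T) ℝ :=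
  (T : ℝ)⁻¹ • annM (Zfull Y X₁ X₂)

/-- `σ̂² = (1/T)(y−Yβ̂)ᵀM₁(y−Yβ̂)`. -/
noncomputable def sigHat2 (y : Fin T → ℝ) (Y : Matrix (Fin T) (Fin G) ℝ)
    (X₁ : Matrix (Fin T) (Fin k₁) ℝ) : ℝ :=
  (T : ℝ)⁻¹ * ((y - Y *ᵥ betaOLS y Y X₁) ⬝ᵥ (M1 X₁ *ᵥ (y - Y *ᵥ betaOLS y Y X₁)))

/-- `σ̃² = (1/T)(y−Yβ̃)ᵀM₁(y−Yβ̃)`. -/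
noncomputable def sigTil2 (y : Fin T → ℝ) (Y : Matrix (Fin T) (Fin G) ℝ)
    (X₁ : Matrix (Fin T) (Fin k₁) ℝ) (X₂ : Matrix (Fin T) (Fin k₂) ℝ) : ℝ :=
  (T : ℝ)⁻¹ * ((y - Y *ᵥ beta2S y Y X₁ X₂) ⬝ᵥ (M1 X₁ *ᵥ (y - Y *ᵥ beta2S y Y X₁ X₂)))

/-- `σ̃₁² = (1/T)(y−Yβ̃)ᵀN₁(y−Yβ̃)`. -/
noncomputable def sigTil1sq (y : Fin T → ℝ) (Y : Matrix (Fin T) (Fin G) ℝ)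
    (X₁ : Matrix (Fin T) (Fin k₁) ℝ) (X₂ : Matrix (Fin T) (Fin k₂) ℝ) : ℝ :=
  (T : ℝ)⁻¹ * ((y - Y *ᵥ beta2S y Y X₁ X₂) ⬝ᵥ (N1 X₁ X₂ *ᵥ (y - Y *ᵥ beta2S y Y X₁ X₂)))

/-- `σ̃₂² = σ̂² − (β̃−β̂)ᵀΔ̂⁻¹(β̃−β̂)`. -/
noncomputable def sigTil2sq (y : Fin T → ℝ) (Y : Matrix (Fin T) (Fin G) ℝ)
    (X₁ : Matrix (Fin T) (Fin k₁) ℝ) (X₂ : Matrix (Fin T) (Fin k₂) ℝ) : ℝ :=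
  sigHat2 y Y X₁ -
    (beta2S y Y X₁ X₂ - betaOLS y Y X₁) ⬝ᵥ
      ((Dhat Y X₁ X₂)⁻¹ *ᵥ (beta2S y Y X₁ X₂ - betaOLS y Y X₁))

/-- The rank condition: `X₁`, `X = [X₁, X₂]`, `[Y, X]` and `[P̄[X]Y, X₁]` all have
full column rank. -/
def RankCond (Y : Matrix (Fin T) (Fin G) ℝ) (X₁ : Matrix (Fin T) (Fin k₁) ℝ)
    (X₂ : Matrix (Fin T) (Fin k₂) ℝ) : Prop :=
  X₁.rank = k₁ ∧ (fromCols X₁ X₂).rank = k₁ + k₂ ∧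
    (fromCols Y (fromCols X₁ X₂)).rank = G + (k₁ + k₂) ∧
    (fromCols (Pm X₁ X₂ * Y) X₁).rank = G + k₁


section AuxHelpers

lemma dot_transpose {m n : Type*} [Fintype m] [Fintype n] (A : Matrix m n ℝ) (v : n → ℝ)
    (w : m → ℝ) : v ⬝ᵥ (Aᵀ *ᵥ w) = (A *ᵥ v) ⬝ᵥ w := by
  rw [dotProduct_mulVec, vecMul_transpose]

lemma quadform {m n : Type*} [Fintype m] [Fintype n]
    (C : Matrix m n ℝ) (A : Matrix m m ℝ) (y : n → ℝ) :
    (C *ᵥ y) ⬝ᵥ (A *ᵥ (C *ᵥ y)) = y ⬝ᵥ ((Cᵀ * A * C) *ᵥ y) := by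
  rw [Matrix.mulVec_mulVec, ← dot_transpose, Matrix.mulVec_mulVec, Matrix.mul_assoc]

lemma mulVec_eq_zero_of_rank {n : Type*} [Fintype n] [DecidableEq n]
    (A : Matrix (Fin T) n ℝ) (h : A.rank = Fintype.card n) (v : n → ℝ)
    (hv : A *ᵥ v = 0) : v = 0 := by
  have hker := A.mulVecLin.finrank_range_add_finrank_ker
  rw [show Module.finrank ℝ (LinearMap.range A.mulVecLin) = A.rank from rfl, h,
    Module.finrank_pi ℝ] at hker
  have h0 : Module.finrank ℝ (LinearMap.ker A.mulVecLin) = 0 := by omega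
  have hbot : LinearMap.ker A.mulVecLin = ⊥ := Submodule.finrank_eq_zero.mp h0
  have hmem : v ∈ LinearMap.ker A.mulVecLin := by simpa [Matrix.mulVecLin_apply] using hv
  simpa [hbot] using hmem

lemma isUnit_gram {n : Type*} [Fintype n] [DecidableEq n]
    (A : Matrix (Fin T) n ℝ) (h : ∀ v, A *ᵥ v = 0 → v = 0) : IsUnit (Aᵀ * A) := by
  rw [Matrix.isUnit_iff_isUnit_det, isUnit_iff_ne_zero]
  intro hdet
  obtain ⟨v, hv0, hv⟩ := Matrix.exists_mulVec_eq_zero_iff.mpr hdet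
  apply hv0
  apply h
  have h2 : (A *ᵥ v) ⬝ᵥ (A *ᵥ v) = 0 := by
    have h3 : v ⬝ᵥ ((Aᵀ * A) *ᵥ v) = 0 := by rw [hv, dotProduct_zero]
    rwa [← Matrix.mulVec_mulVec, dot_transpose] at h3
  exact dotProduct_self_eq_zero.mp h2

lemma isUnit_smul_matrix {n : Type*} [Fintype n] [DecidableEq n] {c : ℝ} {U : Matrix n n ℝ}
    (hc : c ≠ 0) (hU : IsUnit U) : IsUnit (c • U) := by
  rw [Matrix.isUnit_iff_isUnit_det, Matrix.det_smul, isUnit_iff_ne_zero]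
  exact mul_ne_zero (pow_ne_zero _ hc) ((Matrix.isUnit_iff_isUnit_det U).mp hU).ne_zero

lemma final_step (s q κ : ℝ) (Δ : Matrix (Fin G) (Fin G) ℝ) (d : Fin G → ℝ)
    (hs : s ≠ 0) (hΔ : IsUnit Δ) (hq : q = d ⬝ᵥ (Δ⁻¹ *ᵥ d)) :
    IsUnit (s • Δ) ∧ κ * (d ⬝ᵥ ((s • Δ)⁻¹ *ᵥ d)) = κ * (q / s) := by
  have hdet := (Matrix.isUnit_iff_isUnit_det Δ).mp hΔ
  have hinv : (s • Δ)⁻¹ = s⁻¹ • Δ⁻¹ := by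
    apply Matrix.inv_eq_right_inv
    rw [smul_mul_assoc, Matrix.mul_smul, smul_smul, mul_inv_cancel₀ hs,
      Matrix.mul_nonsing_inv _ hdet, one_smul]
  refine ⟨isUnit_smul_matrix hs hΔ, ?_⟩
  rw [hinv, smul_mulVec, dotProduct_smul, smul_eq_mul, hq]
  ring

section P
variable {n : Type*} [Fintype n] [DecidableEq n]

lemma projM_transpose (A : Matrix (Fin T) n ℝ) : (projM A)ᵀ = projM A := by
  simp [projM, Matrix.transpose_mul, Matrix.transpose_nonsing_inv, Matrix.mul_assoc]

lemma projM_mul (A : Matrix (Fin T) n ℝ) (h : IsUnit (Aᵀ * A)) : projM A * A = A := by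
  have h2 := Matrix.nonsing_inv_mul (Aᵀ * A) ((Matrix.isUnit_iff_isUnit_det _).mp h)
  calc projM A * A = A * ((Aᵀ * A)⁻¹ * (Aᵀ * A)) := by simp only [projM, Matrix.mul_assoc]
    _ = A := by rw [h2, Matrix.mul_one]

lemma projM_idem (A : Matrix (Fin T) n ℝ) (h : IsUnit (Aᵀ * A)) :
    projM A * projM A = projM A := by
  calc projM A * projM A = (projM A * A) * (Aᵀ * A)⁻¹ * Aᵀ := by
        simp only [projM, Matrix.mul_assoc]
    _ = projM A := by rw [projM_mul A h]; rfl

lemma annM_transpose (A : Matrix (Fin T) n ℝ) : (annM A)ᵀ = annM A := by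
  rw [annM, Matrix.transpose_sub, Matrix.transpose_one, projM_transpose]

lemma annM_idem (A : Matrix (Fin T) n ℝ) (h : IsUnit (Aᵀ * A)) :
    annM A * annM A = annM A := by
  simp only [annM, Matrix.mul_sub, Matrix.sub_mul, Matrix.one_mul, Matrix.mul_one,
    projM_idem A h]
  abel

lemma projM_mul_right (A : Matrix (Fin T) n ℝ) (C : Matrix (Fin T) (Fin T) ℝ)
    (h : Aᵀ * C = Aᵀ) : projM A * C = projM A := by
  unfold projM
  rw [Matrix.mul_assoc, h]

lemma annM_mulVec_zero (A : Matrix (Fin T) n ℝ) (z : Fin T → ℝ)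
    (h : annM A *ᵥ z = 0) : z = A *ᵥ ((Aᵀ * A)⁻¹ *ᵥ (Aᵀ *ᵥ z)) := by
  rw [annM, Matrix.sub_mulVec, Matrix.one_mulVec, sub_eq_zero] at h
  rw [Matrix.mulVec_mulVec, Matrix.mulVec_mulVec]
  exact h

end P

lemma gram_proj (K : Matrix (Fin T) (Fin T) ℝ) (Y : Matrix (Fin T) (Fin G) ℝ)
    (hKt : Kᵀ = K) (hKK : K * K = K) : (K * Y)ᵀ * (K * Y) = Yᵀ * K * Y := by
  rw [Matrix.transpose_mul, hKt, Matrix.mul_assoc, ← Matrix.mul_assoc K K Y, hKK,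
    ← Matrix.mul_assoc]

lemma cross (M N C : Matrix (Fin T) (Fin T) ℝ) (hMt : Mᵀ = M) (hMM : M * M = M)
    (h : N * M = M * C) : M * Nᵀ * N * M = Cᵀ * M * C := by
  have h1 : M * Nᵀ = (N * M)ᵀ := by rw [Matrix.transpose_mul, hMt]
  calc M * Nᵀ * N * M = (N * M)ᵀ * (N * M) := by rw [h1, Matrix.mul_assoc]
    _ = (M * C)ᵀ * (M * C) := by rw [h]
    _ = Cᵀ * M * C := by
        rw [Matrix.transpose_mul, hMt, Matrix.mul_assoc, ← Matrix.mul_assoc M M C, hMM,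
          ← Matrix.mul_assoc]

lemma sandwich_lhs (K : Matrix (Fin T) (Fin T) ℝ) (Y : Matrix (Fin T) (Fin G) ℝ)
    (Q : Matrix (Fin G) (Fin G) ℝ)
    (hKt : Kᵀ = K) (hQt : Qᵀ = Q)
    (hcancel : ∀ (Z : Matrix (Fin G) (Fin T) ℝ), Yᵀ * (K * (Y * (Q * Z))) = Z) :
    (1 - Y * (Q * (Yᵀ * K)))ᵀ * K * (1 - Y * (Q * (Yᵀ * K)))
      = K - K * (Y * (Q * (Yᵀ * K))) := by
  simp only [Matrix.transpose_sub, Matrix.transpose_one, Matrix.transpose_mul,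
    Matrix.transpose_transpose, hQt, hKt, Matrix.sub_mul, Matrix.mul_sub,
    Matrix.one_mul, Matrix.mul_one, Matrix.mul_assoc, hcancel]
  abel

lemma sandwich_rhs (K : Matrix (Fin T) (Fin T) ℝ) (Y : Matrix (Fin T) (Fin G) ℝ)
    (Q : Matrix (Fin G) (Fin G) ℝ)
    (hKt : Kᵀ = K) (hKK : K * K = K)
    (hGram : ((K * Y)ᵀ * (K * Y))⁻¹ = Q) :
    K * annM (K * Y) * K = K - K * (Y * (Q * (Yᵀ * K))) := by
  have hKKc : ∀ (Z : Matrix (Fin T) (Fin T) ℝ), K * (K * Z) = K * Z := by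
    intro Z; rw [← Matrix.mul_assoc, hKK]
  rw [annM, projM, hGram]
  simp only [Matrix.transpose_mul, hKt, Matrix.sub_mul, Matrix.mul_sub, Matrix.one_mul,
    Matrix.mul_one, Matrix.mul_assoc, hKK, hKKc]

lemma sandwich (K : Matrix (Fin T) (Fin T) ℝ) (Y : Matrix (Fin T) (Fin G) ℝ)
    (hKt : Kᵀ = K) (hKK : K * K = K) (hu : IsUnit (Yᵀ * K * Y)) :
    (1 - Y * ((Yᵀ * K * Y)⁻¹ * (Yᵀ * K)))ᵀ * K * (1 - Y * ((Yᵀ * K * Y)⁻¹ * (Yᵀ * K)))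
      = K * annM (K * Y) * K := by
  have hdet := (Matrix.isUnit_iff_isUnit_det _).mp hu
  have h1 : (Yᵀ * K * Y) * (Yᵀ * K * Y)⁻¹ = 1 := Matrix.mul_nonsing_inv _ hdet
  have hGt : (Yᵀ * K * Y)ᵀ = Yᵀ * K * Y := by
    rw [Matrix.transpose_mul, Matrix.transpose_mul, Matrix.transpose_transpose, hKt,
      Matrix.mul_assoc]
  have hQt : ((Yᵀ * K * Y)⁻¹)ᵀ = (Yᵀ * K * Y)⁻¹ := by
    rw [Matrix.transpose_nonsing_inv, hGt]
  have hcancel : ∀ (Z : Matrix (Fin G) (Fin T) ℝ),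
      Yᵀ * (K * (Y * ((Yᵀ * K * Y)⁻¹ * Z))) = Z := by
    intro Z
    rw [← Matrix.mul_assoc, ← Matrix.mul_assoc, ← Matrix.mul_assoc, h1, Matrix.one_mul]
  have hGram : ((K * Y)ᵀ * (K * Y))⁻¹ = (Yᵀ * K * Y)⁻¹ := by
    rw [gram_proj K Y hKt hKK]
  exact (sandwich_lhs K Y _ hKt hQt hcancel).trans (sandwich_rhs K Y _ hKt hKK hGram).symm

end AuxHelpers

set_option maxHeartbeats 2000000


/-- **Quadratic-form representations of the Wu statistics.**  Under the rank condition,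
for each `l ∈ {1,2,3,4}` with `σ̃_l² ≠ 0`, the matrix `Σ̃_l = σ̃_l²Δ̂` is invertible and
`T_l = κ_l(β̃−β̂)ᵀΣ̃_l⁻¹(β̃−β̂) = κ_l·(yᵀΨ₀y)/(yᵀΛ_ly)`, where the scaling factors are
`σ̃₁², σ̃₂², σ̃₃² = σ̃², σ̃₄² = σ̂²` and `κ₁ = (k₂−G)/G`, `κ₂ = (T−k₁−2G)/G`,
`κ₃ = κ₄ = T−k₁−G`. -/
theorem stmt12 {T G k₁ k₂ : ℕ}
    (hT : 0 < T) (hG : 0 < G) (hk₁ : 0 < k₁) (hk₂ : 0 < k₂)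
    (y : Fin T → ℝ) (Y : Matrix (Fin T) (Fin G) ℝ)
    (X₁ : Matrix (Fin T) (Fin k₁) ℝ) (X₂ : Matrix (Fin T) (Fin k₂) ℝ)
    (hrank : RankCond Y X₁ X₂) :
    (sigTil1sq y Y X₁ X₂ ≠ 0 →
      IsUnit (sigTil1sq y Y X₁ X₂ • Dhat Y X₁ X₂) ∧
      ((k₂ : ℝ) - (G : ℝ)) / (G : ℝ) *
          ((beta2S y Y X₁ X₂ - betaOLS y Y X₁) ⬝ᵥ
            ((sigTil1sq y Y X₁ X₂ • Dhat Y X₁ X₂)⁻¹ *ᵥ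
              (beta2S y Y X₁ X₂ - betaOLS y Y X₁)))
        = ((k₂ : ℝ) - (G : ℝ)) / (G : ℝ) *
            (y ⬝ᵥ (Psi0 Y X₁ X₂ *ᵥ y) / (y ⬝ᵥ (Lam1 Y X₁ X₂ *ᵥ y)))) ∧
    (sigTil2sq y Y X₁ X₂ ≠ 0 →
      IsUnit (sigTil2sq y Y X₁ X₂ • Dhat Y X₁ X₂) ∧
      ((T : ℝ) - (k₁ : ℝ) - 2 * (G : ℝ)) / (G : ℝ) *
          ((beta2S y Y X₁ X₂ - betaOLS y Y X₁) ⬝ᵥ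
            ((sigTil2sq y Y X₁ X₂ • Dhat Y X₁ X₂)⁻¹ *ᵥ
              (beta2S y Y X₁ X₂ - betaOLS y Y X₁)))
        = ((T : ℝ) - (k₁ : ℝ) - 2 * (G : ℝ)) / (G : ℝ) *
            (y ⬝ᵥ (Psi0 Y X₁ X₂ *ᵥ y) / (y ⬝ᵥ (Lam2 Y X₁ X₂ *ᵥ y)))) ∧
    (sigTil2 y Y X₁ X₂ ≠ 0 →
      IsUnit (sigTil2 y Y X₁ X₂ • Dhat Y X₁ X₂) ∧
      ((T : ℝ) - (k₁ : ℝ) - (G : ℝ)) *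
          ((beta2S y Y X₁ X₂ - betaOLS y Y X₁) ⬝ᵥ
            ((sigTil2 y Y X₁ X₂ • Dhat Y X₁ X₂)⁻¹ *ᵥ
              (beta2S y Y X₁ X₂ - betaOLS y Y X₁)))
        = ((T : ℝ) - (k₁ : ℝ) - (G : ℝ)) *
            (y ⬝ᵥ (Psi0 Y X₁ X₂ *ᵥ y) / (y ⬝ᵥ (Lam3 Y X₁ X₂ *ᵥ y)))) ∧
    (sigHat2 y Y X₁ ≠ 0 →
      IsUnit (sigHat2 y Y X₁ • Dhat Y X₁ X₂) ∧
      ((T : ℝ) - (k₁ : ℝ) - (G : ℝ)) *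
          ((beta2S y Y X₁ X₂ - betaOLS y Y X₁) ⬝ᵥ
            ((sigHat2 y Y X₁ • Dhat Y X₁ X₂)⁻¹ *ᵥ
              (beta2S y Y X₁ X₂ - betaOLS y Y X₁)))
        = ((T : ℝ) - (k₁ : ℝ) - (G : ℝ)) *
            (y ⬝ᵥ (Psi0 Y X₁ X₂ *ᵥ y) / (y ⬝ᵥ (Lam4 Y X₁ *ᵥ y)))) := by
  obtain ⟨hr1, hr2, hr3, hr4⟩ := hrank
  have hX₁inj : ∀ v, X₁ *ᵥ v = 0 → v = 0 :=
    mulVec_eq_zero_of_rank X₁ (by simpa using hr1)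
  have hX₁u : IsUnit (X₁ᵀ * X₁) := isUnit_gram X₁ hX₁inj
  have hXinj : ∀ v, fromCols X₁ X₂ *ᵥ v = 0 → v = 0 :=
    mulVec_eq_zero_of_rank _ (by simpa using hr2)
  have hXu : IsUnit ((fromCols X₁ X₂)ᵀ * fromCols X₁ X₂) := isUnit_gram _ hXinj
  have hZinj : ∀ v, fromCols Y (fromCols X₁ X₂) *ᵥ v = 0 → v = 0 :=
    mulVec_eq_zero_of_rank _ (by simpa using hr3)
  have hWinj : ∀ v, fromCols (Pm X₁ X₂ * Y) X₁ *ᵥ v = 0 → v = 0 :=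
    mulVec_eq_zero_of_rank _ (by simpa using hr4)
  -- projection facts
  have hM₁t : (M1 X₁)ᵀ = M1 X₁ := annM_transpose X₁
  have hM₁M₁ : M1 X₁ * M1 X₁ = M1 X₁ := annM_idem X₁ hX₁u
  have hXsplit : fromCols X₁ X₂ *
      fromRows (1 : Matrix (Fin k₁) (Fin k₁) ℝ) (0 : Matrix (Fin k₂) (Fin k₁) ℝ) = X₁ := by
    rw [fromCols_mul_fromRows]; simp
  have hPX₁ : projM (fromCols X₁ X₂) * X₁ = X₁ := by
    calc projM (fromCols X₁ X₂) * X₁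
        = projM (fromCols X₁ X₂) * (fromCols X₁ X₂ *
            fromRows (1 : Matrix (Fin k₁) (Fin k₁) ℝ) (0 : Matrix (Fin k₂) (Fin k₁) ℝ)) := by
          rw [hXsplit]
      _ = (projM (fromCols X₁ X₂) * fromCols X₁ X₂) *
            fromRows (1 : Matrix (Fin k₁) (Fin k₁) ℝ) (0 : Matrix (Fin k₂) (Fin k₁) ℝ) := by
          rw [Matrix.mul_assoc]
      _ = X₁ := by rw [projM_mul _ hXu, hXsplit]
  have hX₁tP : X₁ᵀ * projM (fromCols X₁ X₂) = X₁ᵀ := by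
    have h := congrArg Matrix.transpose hPX₁
    rwa [Matrix.transpose_mul, projM_transpose] at h
  have hP₁P : projM X₁ * projM (fromCols X₁ X₂) = projM X₁ :=
    projM_mul_right X₁ _ hX₁tP
  have hPP₁ : projM (fromCols X₁ X₂) * projM X₁ = projM X₁ := by
    have h := congrArg Matrix.transpose hP₁P
    rwa [Matrix.transpose_mul, projM_transpose, projM_transpose] at h
  have hN1eq : N1 X₁ X₂ = projM (fromCols X₁ X₂) - projM X₁ := by
    show (1 - projM X₁) * projM (fromCols X₁ X₂) = _
    rw [Matrix.sub_mul, Matrix.one_mul, hP₁P]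
  have hN₁t : (N1 X₁ X₂)ᵀ = N1 X₁ X₂ := by
    rw [hN1eq, Matrix.transpose_sub, projM_transpose, projM_transpose]
  have hN₁N₁ : N1 X₁ X₂ * N1 X₁ X₂ = N1 X₁ X₂ := by
    rw [hN1eq]
    simp only [Matrix.sub_mul, Matrix.mul_sub, projM_idem _ hXu, projM_idem X₁ hX₁u,
      hP₁P, hPP₁]
    abel
  have hN₁M₁ : N1 X₁ X₂ * M1 X₁ = N1 X₁ X₂ := by
    rw [hN1eq]
    show _ * (1 - projM X₁) = _
    simp only [Matrix.sub_mul, Matrix.mul_sub, Matrix.mul_one, projM_idem X₁ hX₁u, hPP₁]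
    abel
  have hMmEq : Mm X₁ X₂ = M1 X₁ - N1 X₁ X₂ := by
    rw [hN1eq]
    show 1 - projM (fromCols X₁ X₂) = (1 - projM X₁) - _
    abel
  -- injectivity of projected Y blocks
  have hinjM1Y : ∀ v, (M1 X₁ * Y) *ᵥ v = 0 → v = 0 := by
    intro v hv
    rw [← Matrix.mulVec_mulVec] at hv
    have hz := annM_mulVec_zero X₁ (Y *ᵥ v) hv
    have h0 : fromCols Y (fromCols X₁ X₂) *ᵥ
        Sum.elim v (Sum.elim (-((X₁ᵀ * X₁)⁻¹ *ᵥ (X₁ᵀ *ᵥ (Y *ᵥ v)))) 0) = 0 := by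
      rw [fromCols_mulVec_sumElim, fromCols_mulVec_sumElim, Matrix.mulVec_neg,
        Matrix.mulVec_zero, add_zero, ← hz]
      exact add_neg_cancel _
    have h1 := hZinj _ h0
    funext i
    exact congrFun h1 (Sum.inl i)
  have hsplitN1 : N1 X₁ X₂ * Y = M1 X₁ * (Pm X₁ X₂ * Y) := by
    simp only [N1, Matrix.mul_assoc]
  have hinjN1Y : ∀ v, (N1 X₁ X₂ * Y) *ᵥ v = 0 → v = 0 := by
    intro v hv
    rw [hsplitN1, ← Matrix.mulVec_mulVec] at hv
    have hz := annM_mulVec_zero X₁ ((Pm X₁ X₂ * Y) *ᵥ v) hv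
    have h0 : fromCols (Pm X₁ X₂ * Y) X₁ *ᵥ
        Sum.elim v (-((X₁ᵀ * X₁)⁻¹ *ᵥ (X₁ᵀ *ᵥ ((Pm X₁ X₂ * Y) *ᵥ v)))) = 0 := by
      rw [fromCols_mulVec_sumElim, Matrix.mulVec_neg, ← hz]
      exact add_neg_cancel _
    have h1 := hWinj _ h0
    funext i
    exact congrFun h1 (Sum.inl i)
  have hinjMY : ∀ v, (Mm X₁ X₂ * Y) *ᵥ v = 0 → v = 0 := by
    intro v hv
    rw [← Matrix.mulVec_mulVec] at hv
    have hz := annM_mulVec_zero (fromCols X₁ X₂) (Y *ᵥ v) hv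
    have h0 : fromCols Y (fromCols X₁ X₂) *ᵥ
        Sum.elim v (-(((fromCols X₁ X₂)ᵀ * fromCols X₁ X₂)⁻¹ *ᵥ
          ((fromCols X₁ X₂)ᵀ *ᵥ (Y *ᵥ v)))) = 0 := by
      rw [fromCols_mulVec_sumElim, Matrix.mulVec_neg, ← hz]
      exact add_neg_cancel _
    have h1 := hZinj _ h0
    funext i
    exact congrFun h1 (Sum.inl i)
  -- Gram units
  have uLS : IsUnit (Yᵀ * M1 X₁ * Y) := by
    rw [← gram_proj (M1 X₁) Y hM₁t hM₁M₁]
    exact isUnit_gram _ hinjM1Y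
  have uIV : IsUnit (Yᵀ * N1 X₁ X₂ * Y) := by
    rw [← gram_proj (N1 X₁ X₂) Y hN₁t hN₁N₁]
    exact isUnit_gram _ hinjN1Y
  have hMmT : (Mm X₁ X₂)ᵀ = Mm X₁ X₂ := annM_transpose _
  have hMmMm : Mm X₁ X₂ * Mm X₁ X₂ = Mm X₁ X₂ := annM_idem _ hXu
  have uV : IsUnit (Yᵀ * Mm X₁ X₂ * Y) := by
    rw [← gram_proj (Mm X₁ X₂) Y hMmT hMmMm]
    exact isUnit_gram _ hinjMY
  have hTinv : ((T : ℝ)⁻¹ : ℝ) ≠ 0 := inv_ne_zero (Nat.cast_ne_zero.mpr hT.ne')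
  have uOmIV : IsUnit (OmIV Y X₁ X₂) := isUnit_smul_matrix hTinv uIV
  have uOmLS : IsUnit (OmLS Y X₁) := isUnit_smul_matrix hTinv uLS
  have uSigV : IsUnit (SigV Y X₁ X₂) := isUnit_smul_matrix hTinv uV
  -- Dhat factorization and invertibility
  have hOmSub : OmLS Y X₁ - OmIV Y X₁ X₂ = SigV Y X₁ X₂ := by
    simp only [OmLS, OmIV, SigV, ← smul_sub]
    congr 1
    rw [hMmEq, Matrix.mul_sub, Matrix.sub_mul]
  have h1LS : OmLS Y X₁ * (OmLS Y X₁)⁻¹ = 1 :=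
    Matrix.mul_nonsing_inv _ ((Matrix.isUnit_iff_isUnit_det _).mp uOmLS)
  have h2IV : (OmIV Y X₁ X₂)⁻¹ * OmIV Y X₁ X₂ = 1 :=
    Matrix.nonsing_inv_mul _ ((Matrix.isUnit_iff_isUnit_det _).mp uOmIV)
  have hDfac : Dhat Y X₁ X₂ = (OmIV Y X₁ X₂)⁻¹ * SigV Y X₁ X₂ * (OmLS Y X₁)⁻¹ := by
    rw [← hOmSub, Matrix.mul_sub, Matrix.sub_mul, Matrix.mul_assoc, h1LS, Matrix.mul_one,
      h2IV, Matrix.one_mul]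
    rfl
  have uD : IsUnit (Dhat Y X₁ X₂) := by
    rw [hDfac]
    exact ((Matrix.isUnit_nonsing_inv_iff.mpr uOmIV).mul uSigV).mul
      (Matrix.isUnit_nonsing_inv_iff.mpr uOmLS)
  -- B and C1 stability under M₁
  have hmulM2 : ∀ (Q : Matrix (Fin G) (Fin G) ℝ),
      Q * (Yᵀ * N1 X₁ X₂) * M1 X₁ = Q * (Yᵀ * N1 X₁ X₂) := by
    intro Q
    rw [Matrix.mul_assoc Q, Matrix.mul_assoc Yᵀ, hN₁M₁]
  have hmulM1 : ∀ (Q : Matrix (Fin G) (Fin G) ℝ),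
      Q * (Yᵀ * M1 X₁) * M1 X₁ = Q * (Yᵀ * M1 X₁) := by
    intro Q
    rw [Matrix.mul_assoc Q, Matrix.mul_assoc Yᵀ, hM₁M₁]
  have hB2M : B2 Y X₁ X₂ * M1 X₁ = B2 Y X₁ X₂ := hmulM2 _
  have hB1M : B1 Y X₁ * M1 X₁ = B1 Y X₁ := hmulM1 _
  have hC1M : C1 Y X₁ X₂ * M1 X₁ = C1 Y X₁ X₂ := by
    show (B2 Y X₁ X₂ - B1 Y X₁) * M1 X₁ = _
    rw [Matrix.sub_mul, hB2M, hB1M]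
    rfl
  have hMC : M1 X₁ * (C1 Y X₁ X₂)ᵀ = (C1 Y X₁ X₂)ᵀ := by
    conv_lhs => rw [← hM₁t]
    rw [← Matrix.transpose_mul, hC1M]
  have hPsiM : M1 X₁ * Psi0 Y X₁ X₂ * M1 X₁ = Psi0 Y X₁ X₂ := by
    show M1 X₁ * ((C1 Y X₁ X₂)ᵀ * (Dhat Y X₁ X₂)⁻¹ * C1 Y X₁ X₂) * M1 X₁ = _
    calc M1 X₁ * ((C1 Y X₁ X₂)ᵀ * (Dhat Y X₁ X₂)⁻¹ * C1 Y X₁ X₂) * M1 X₁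
        = (M1 X₁ * (C1 Y X₁ X₂)ᵀ) * (Dhat Y X₁ X₂)⁻¹ * (C1 Y X₁ X₂ * M1 X₁) := by
          simp only [Matrix.mul_assoc]
      _ = Psi0 Y X₁ X₂ := by rw [hMC, hC1M]; rfl
  -- scalar identities
  have hd : beta2S y Y X₁ X₂ - betaOLS y Y X₁ = C1 Y X₁ X₂ *ᵥ y := by
    show B2 Y X₁ X₂ *ᵥ y - B1 Y X₁ *ᵥ y = _
    rw [show C1 Y X₁ X₂ = B2 Y X₁ X₂ - B1 Y X₁ from rfl, Matrix.sub_mulVec]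
  have hq : y ⬝ᵥ (Psi0 Y X₁ X₂ *ᵥ y)
      = (beta2S y Y X₁ X₂ - betaOLS y Y X₁) ⬝ᵥ
        ((Dhat Y X₁ X₂)⁻¹ *ᵥ (beta2S y Y X₁ X₂ - betaOLS y Y X₁)) := by
    rw [hd]
    exact (quadform (C1 Y X₁ X₂) (Dhat Y X₁ X₂)⁻¹ y).symm
  have hres2 : y - Y *ᵥ beta2S y Y X₁ X₂ = (1 - Y * B2 Y X₁ X₂) *ᵥ y := by
    rw [Matrix.sub_mulVec, Matrix.one_mulVec,
      show beta2S y Y X₁ X₂ = B2 Y X₁ X₂ *ᵥ y from rfl, Matrix.mulVec_mulVec]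
  have hres1 : y - Y *ᵥ betaOLS y Y X₁ = (1 - Y * B1 Y X₁) *ᵥ y := by
    rw [Matrix.sub_mulVec, Matrix.one_mulVec,
      show betaOLS y Y X₁ = B1 Y X₁ *ᵥ y from rfl, Matrix.mulVec_mulVec]
  have hsand1 : (1 - Y * B2 Y X₁ X₂)ᵀ * N1 X₁ X₂ * (1 - Y * B2 Y X₁ X₂)
      = N1 X₁ X₂ * annM (N1 X₁ X₂ * Y) * N1 X₁ X₂ :=
    sandwich (N1 X₁ X₂) Y hN₁t hN₁N₁ uIV
  have hsand4 : (1 - Y * B1 Y X₁)ᵀ * M1 X₁ * (1 - Y * B1 Y X₁)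
      = M1 X₁ * annM (M1 X₁ * Y) * M1 X₁ :=
    sandwich (M1 X₁) Y hM₁t hM₁M₁ uLS
  have hN₂M : N2 Y X₁ X₂ * M1 X₁ = M1 X₁ * (1 - Y * B2 Y X₁ X₂) := by
    show (1 - M1 X₁ * Y * B2 Y X₁ X₂) * M1 X₁ = _
    rw [Matrix.sub_mul, Matrix.one_mul, Matrix.mul_sub, Matrix.mul_one]
    congr 1
    rw [Matrix.mul_assoc (M1 X₁ * Y), hB2M, Matrix.mul_assoc]
  have hcross3 : M1 X₁ * (N2 Y X₁ X₂)ᵀ * N2 Y X₁ X₂ * M1 X₁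
      = (1 - Y * B2 Y X₁ X₂)ᵀ * M1 X₁ * (1 - Y * B2 Y X₁ X₂) :=
    cross (M1 X₁) (N2 Y X₁ X₂) _ hM₁t hM₁M₁ hN₂M
  have hs1 : y ⬝ᵥ (Lam1 Y X₁ X₂ *ᵥ y) = sigTil1sq y Y X₁ X₂ := by
    show y ⬝ᵥ (((T : ℝ)⁻¹ • (N1 X₁ X₂ * annM (N1 X₁ X₂ * Y) * N1 X₁ X₂)) *ᵥ y) = _
    rw [smul_mulVec, dotProduct_smul, smul_eq_mul, ← hsand1,
      show sigTil1sq y Y X₁ X₂ = (T : ℝ)⁻¹ * ((y - Y *ᵥ beta2S y Y X₁ X₂) ⬝ᵥ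
        (N1 X₁ X₂ *ᵥ (y - Y *ᵥ beta2S y Y X₁ X₂))) from rfl, hres2, quadform]
  have hs4 : y ⬝ᵥ (Lam4 Y X₁ *ᵥ y) = sigHat2 y Y X₁ := by
    show y ⬝ᵥ (((T : ℝ)⁻¹ • (M1 X₁ * annM (M1 X₁ * Y) * M1 X₁)) *ᵥ y) = _
    rw [smul_mulVec, dotProduct_smul, smul_eq_mul, ← hsand4,
      show sigHat2 y Y X₁ = (T : ℝ)⁻¹ * ((y - Y *ᵥ betaOLS y Y X₁) ⬝ᵥ
        (M1 X₁ *ᵥ (y - Y *ᵥ betaOLS y Y X₁))) from rfl, hres1, quadform]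
  have hs3 : y ⬝ᵥ (Lam3 Y X₁ X₂ *ᵥ y) = sigTil2 y Y X₁ X₂ := by
    show y ⬝ᵥ (((T : ℝ)⁻¹ • (M1 X₁ * (N2 Y X₁ X₂)ᵀ * N2 Y X₁ X₂ * M1 X₁)) *ᵥ y) = _
    rw [smul_mulVec, dotProduct_smul, smul_eq_mul, hcross3,
      show sigTil2 y Y X₁ X₂ = (T : ℝ)⁻¹ * ((y - Y *ᵥ beta2S y Y X₁ X₂) ⬝ᵥ
        (M1 X₁ *ᵥ (y - Y *ᵥ beta2S y Y X₁ X₂))) from rfl, hres2, quadform]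
  have hLam2 : Lam2 Y X₁ X₂ = Lam4 Y X₁ - Psi0 Y X₁ X₂ := by
    show M1 X₁ * ((T : ℝ)⁻¹ • annM (M1 X₁ * Y) - Psi0 Y X₁ X₂) * M1 X₁ = _
    rw [Matrix.mul_sub, Matrix.sub_mul, hPsiM, Matrix.mul_smul, smul_mul_assoc]
    rfl
  have hs2 : y ⬝ᵥ (Lam2 Y X₁ X₂ *ᵥ y) = sigTil2sq y Y X₁ X₂ := by
    rw [hLam2, Matrix.sub_mulVec, dotProduct_sub, hs4, hq]
    rfl
  refine ⟨fun hs => ?_, fun hs => ?_, fun hs => ?_, fun hs => ?_⟩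
  · obtain ⟨hu, heq⟩ := final_step (sigTil1sq y Y X₁ X₂) (y ⬝ᵥ (Psi0 Y X₁ X₂ *ᵥ y))
      (((k₂ : ℝ) - (G : ℝ)) / (G : ℝ)) (Dhat Y X₁ X₂)
      (beta2S y Y X₁ X₂ - betaOLS y Y X₁) hs uD hq
    exact ⟨hu, by rw [heq, hs1]⟩
  · obtain ⟨hu, heq⟩ := final_step (sigTil2sq y Y X₁ X₂) (y ⬝ᵥ (Psi0 Y X₁ X₂ *ᵥ y))
      (((T : ℝ) - (k₁ : ℝ) - 2 * (G : ℝ)) / (G : ℝ)) (Dhat Y X₁ X₂)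
      (beta2S y Y X₁ X₂ - betaOLS y Y X₁) hs uD hq
    exact ⟨hu, by rw [heq, hs2]⟩
  · obtain ⟨hu, heq⟩ := final_step (sigTil2 y Y X₁ X₂) (y ⬝ᵥ (Psi0 Y X₁ X₂ *ᵥ y))
      ((T : ℝ) - (k₁ : ℝ) - (G : ℝ)) (Dhat Y X₁ X₂)
      (beta2S y Y X₁ X₂ - betaOLS y Y X₁) hs uD hq
    exact ⟨hu, by rw [heq, hs3]⟩
  · obtain ⟨hu, heq⟩ := final_step (sigHat2 y Y X₁) (y ⬝ᵥ (Psi0 Y X₁ X₂ *ᵥ y))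
      ((T : ℝ) - (k₁ : ℝ) - (G : ℝ)) (Dhat Y X₁ X₂)
      (beta2S y Y X₁ X₂ - betaOLS y Y X₁) hs uD hq
    exact ⟨hu, by rw [heq, hs4]⟩
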